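/- arXiv:1304.2534 — 3 statements merged into one kernel-verified Lean document; each statement's English description precedes it below -/
import Mathlib

section
/- (Noncommutative de Rham cohomology of ℝ³_λ, degree 3.) For every λ ∈ ℂ, every 3-form is exact: the map d₂ : Ω² → Ω³ is surjective. That is, H³ = {0}. -/
noncomputable section
open TensorProduct

/-- The bracket of `g_λ` on coordinates: `[x₁,x₂] = 2λx₂`, `[x₁,x₃] = 2λx₃`, `[x₂,x₃] = 0`. -/
def gbr (l : ℂ) (u v : Fin 3 → ℂ) : Fin 3 → ℂ :=
  ![0, 2 * l * (u 0 * v 1 - u 1 * v 0), 2 * l * (u 0 * v 2 - u 2 * v 0)]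

lemma gbr_add_left (l : ℂ) (u v w : Fin 3 → ℂ) :
    gbr l (u + v) w = gbr l u w + gbr l v w := by
  funext i; fin_cases i <;> simp [gbr] <;> ring

lemma gbr_add_right (l : ℂ) (u v w : Fin 3 → ℂ) :
    gbr l u (v + w) = gbr l u v + gbr l u w := by
  funext i; fin_cases i <;> simp [gbr] <;> ring

lemma gbr_self (l : ℂ) (u : Fin 3 → ℂ) : gbr l u u = 0 := by
  funext i; fin_cases i <;> simp [gbr] <;> ring_nf <;> tauto

lemma gbr_leibniz (l : ℂ) (u v w : Fin 3 → ℂ) :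
    gbr l u (gbr l v w) = gbr l (gbr l u v) w + gbr l v (gbr l u w) := by
  funext i; fin_cases i <;> simp [gbr] <;> ring

lemma gbr_smul_right (l c : ℂ) (u v : Fin 3 → ℂ) :
    gbr l u (c • v) = c • gbr l u v := by
  funext i; fin_cases i <;> simp [gbr] <;> ring

/-- The underlying type of the Lie algebra `g_λ`. -/
def G (_l : ℂ) : Type := Fin 3 → ℂ

instance (l : ℂ) : AddCommGroup (G l) := inferInstanceAs (AddCommGroup (Fin 3 → ℂ))
instance (l : ℂ) : Module ℂ (G l) := inferInstanceAs (Module ℂ (Fin 3 → ℂ))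

instance (l : ℂ) : LieRing (G l) :=
  { (inferInstance : AddCommGroup (G l)) with
    bracket := fun u v => gbr l u v
    add_lie := fun u v w => gbr_add_left l u v w
    lie_add := fun u v w => gbr_add_right l u v w
    lie_self := fun u => gbr_self l u
    leibniz_lie := fun u v w => gbr_leibniz l u v w }

instance (l : ℂ) : LieAlgebra ℂ (G l) :=
  { (inferInstance : Module ℂ (G l)) with
    lie_smul := fun c u v => gbr_smul_right l c u v }

/-- The universal enveloping algebra `U_λ`. -/
abbrev Uenv (l : ℂ) := UniversalEnvelopingAlgebra ℂ (G l)

attribute [local instance] LieRing.ofAssociativeRing LieAlgebra.ofAssociativeAlgebra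

/-- The canonical embedding `ι : g_λ → U_λ`. -/
def iotaU (l : ℂ) : G l →ₗ⁅ℂ⁆ Uenv l := UniversalEnvelopingAlgebra.ι ℂ

/-- The basis vector `x_a` of `g_λ` (0-indexed). -/
def xvec (l : ℂ) (a : Fin 3) : G l := (Pi.single a 1 : Fin 3 → ℂ)

/-- The generator `x_a` inside `U_λ`. -/
def Xgen (l : ℂ) (a : Fin 3) : Uenv l := iotaU l (xvec l a)

abbrev V3 := Fin 3 → ℂ

/-- `Ω¹ = ℂ³ ⊗ U_λ`. -/
abbrev Om1 (l : ℂ) := V3 ⊗[ℂ] Uenv l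

/-- The representation matrices `ρ(x₁) = λ diag(1,1,-1)`, `ρ(x₂) = λE₁₃`, `ρ(x₃) = λE₂₃`. -/
def rhoM (l : ℂ) : Fin 3 → Matrix (Fin 3) (Fin 3) ℂ :=
  ![l • Matrix.diagonal ![1, 1, -1],
    l • Matrix.single 0 2 1,
    l • Matrix.single 1 2 1]

/-- The representation `ρ` on a general element of `g_λ`. -/
def rhoLin (l : ℂ) (u : G l) : Matrix (Fin 3) (Fin 3) ℂ :=
  u 0 • rhoM l 0 + u 1 • rhoM l 1 + u 2 • rhoM l 2

/-- Right action of `U_λ` on `Ω¹`: `(v ⊗ u)·w = v ⊗ (u*w)`. -/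
def rAct (l : ℂ) (w : Uenv l) : Om1 l →ₗ[ℂ] Om1 l :=
  LinearMap.lTensor V3 (LinearMap.mulRight ℂ w)

/-- Left action of `x ∈ g_λ` on `Ω¹`: `x·(v ⊗ u) = ρ(x)v ⊗ u + v ⊗ (x*u)`. -/
def lActVec (l : ℂ) (x : G l) : Om1 l →ₗ[ℂ] Om1 l :=
  LinearMap.rTensor (Uenv l) (Matrix.toLin' (rhoLin l x)) +
    LinearMap.lTensor V3 (LinearMap.mulLeft ℂ (iotaU l x))

/-- The invariant 1-forms: `dx₁ = -e₃`, `dx₂ = e₁`, `dx₃ = e₂` (as vectors in `ℂ³`). -/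
def omegaV : Fin 3 → V3 :=
  ![-(Pi.single 2 1), Pi.single 0 1, Pi.single 1 1]

/-- The basic 1-forms `dx_a = ω_a ⊗ 1  ∈ Ω¹`. -/
def dx (l : ℂ) (a : Fin 3) : Om1 l := (omegaV a) ⊗ₜ[ℂ] (1 : Uenv l)


abbrev ExtA := ExteriorAlgebra ℂ V3

/-- Wedge of a vector with a vector, landing in `Λ²ℂ³`. -/
def wedge1 (v : V3) : V3 →ₗ[ℂ] ⋀[ℂ]^2 V3 where
  toFun w := ⟨ExteriorAlgebra.ι ℂ v * ExteriorAlgebra.ι ℂ w, by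
    show _ ∈ (LinearMap.range (ExteriorAlgebra.ι ℂ : V3 →ₗ[ℂ] ExtA)) ^ 2
    rw [sq]
    exact Submodule.mul_mem_mul (LinearMap.mem_range_self _ v) (LinearMap.mem_range_self _ w)⟩
  map_add' w₁ w₂ := by ext; simp [mul_add]
  map_smul' c w := by ext; simp [Algebra.mul_smul_comm]

/-- Wedge of a 2-vector with a vector, landing in `Λ³ℂ³`. -/
def wedge2 (b : ⋀[ℂ]^2 V3) : V3 →ₗ[ℂ] ⋀[ℂ]^3 V3 where
  toFun w := ⟨(b : ExtA) * ExteriorAlgebra.ι ℂ w, by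
    show _ ∈ (LinearMap.range (ExteriorAlgebra.ι ℂ : V3 →ₗ[ℂ] ExtA)) ^ 3
    rw [pow_succ]
    exact Submodule.mul_mem_mul b.2 (LinearMap.mem_range_self _ w)⟩
  map_add' w₁ w₂ := by ext; simp [mul_add]
  map_smul' c w := by ext; simp [Algebra.mul_smul_comm]

/-- `Ω² = Λ²ℂ³ ⊗ U_λ`. -/
abbrev Om2 (l : ℂ) := (⋀[ℂ]^2 V3) ⊗[ℂ] Uenv l

/-- `Ω³ = Λ³ℂ³ ⊗ U_λ`. -/
abbrev Om3 (l : ℂ) := (⋀[ℂ]^3 V3) ⊗[ℂ] Uenv l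

-- ===================== Auxiliary machinery =====================
namespace DeRhamAux

/-- standard basis vectors of `V3` -/
def ee (i : Fin 3) : V3 := Pi.single i 1

local notation "ιe" => ExteriorAlgebra.ι ℂ (M := V3)

lemma V3_decomp (v : V3) : v = v 0 • ee 0 + v 1 • ee 1 + v 2 • ee 2 := by
  funext i; fin_cases i <;> simp [ee, Pi.single_apply]

lemma V3_decomp' (v : V3) : ∃ a b c : ℂ, v = a • ee 0 + b • ee 1 + c • ee 2 :=
  ⟨v 0, v 1, v 2, V3_decomp v⟩

lemma swap (x y : V3) : ιe x * ιe y = -(ιe y * ιe x) :=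
  eq_neg_of_add_eq_zero_left (ExteriorAlgebra.ι_add_mul_swap x y)

lemma swap' (x y : V3) (z : ExtA) : ιe x * (ιe y * z) = -(ιe y * (ιe x * z)) := by
  rw [← mul_assoc, ← mul_assoc, swap, neg_mul]

lemma cancel (x : V3) (z : ExtA) : ιe x * (ιe x * z) = 0 := by
  rw [← mul_assoc, ExteriorAlgebra.ι_sq_zero, zero_mul]

/-- The top wedge `e₀e₁e₂` in the exterior algebra. -/
def t3 : ExtA := ιe (ee 0) * ιe (ee 1) * ιe (ee 2)

lemma trip_mem (u v w : V3) :
    ιe u * ιe v * ιe w ∈ Submodule.span ℂ {t3} := by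
  obtain ⟨a0, a1, a2, rfl⟩ := V3_decomp' u
  obtain ⟨b0, b1, b2, rfl⟩ := V3_decomp' v
  obtain ⟨c0, c1, c2, rfl⟩ := V3_decomp' w
  simp only [map_add, map_smul, add_mul, mul_add, smul_mul_assoc, mul_smul_comm, smul_smul]
  repeat' first
    | refine Submodule.add_mem _ ?_ ?_
    | refine Submodule.smul_mem _ _ ?_
  all_goals
    simp only [mul_assoc, swap (ee 1) (ee 0), swap (ee 2) (ee 0), swap (ee 2) (ee 1),
      swap' (ee 1) (ee 0), swap' (ee 2) (ee 0), swap' (ee 2) (ee 1),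
      cancel, mul_neg, neg_mul, zero_mul, neg_neg, mul_zero, neg_zero,
      ExteriorAlgebra.ι_sq_zero]
  all_goals
    first
    | exact Submodule.zero_mem _
    | exact Submodule.neg_mem _ (Submodule.subset_span (by simp [t3, mul_assoc]))
    | exact Submodule.subset_span (by simp [t3, mul_assoc])

lemma cube_mem (x : ExtA)
    (hx : x ∈ (LinearMap.range (ExteriorAlgebra.ι ℂ : V3 →ₗ[ℂ] ExtA)) ^ 3) :
    x ∈ Submodule.span ℂ {t3} := by
  rw [pow_succ] at hx
  refine Submodule.mul_induction_on hx ?_ (fun a b ha hb => Submodule.add_mem _ ha hb)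
  intro y hy z hz
  obtain ⟨w, rfl⟩ := hz
  rw [sq] at hy
  refine Submodule.mul_induction_on hy ?_
    (fun a b ha hb => by rw [add_mul]; exact Submodule.add_mem _ ha hb)
  intro m hm n hn
  obtain ⟨u, rfl⟩ := hm
  obtain ⟨v, rfl⟩ := hn
  exact trip_mem u v w

/-- The top wedge as an element of `⋀[ℂ]^3 V3`. -/
def tau : ⋀[ℂ]^3 V3 := wedge2 (wedge1 (ee 0) (ee 1)) (ee 2)

lemma tau_val : (tau : ExtA) = t3 := rfl

lemma exterior3_eq_smul (b : ⋀[ℂ]^3 V3) : ∃ c : ℂ, b = c • tau := by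
  obtain ⟨c, hc⟩ := Submodule.mem_span_singleton.mp (cube_mem b.1 b.2)
  exact ⟨c, Subtype.ext (by rw [← hc]; rfl)⟩

lemma wedge2_b12 (w : V3) : wedge2 (wedge1 (ee 1) (ee 2)) w = w 0 • tau := by
  apply Subtype.ext
  show ιe (ee 1) * ιe (ee 2) * ιe w = w 0 • t3
  conv_lhs => rw [V3_decomp w]
  simp only [map_add, map_smul, mul_add, mul_smul_comm, t3,
    mul_assoc, swap (ee 1) (ee 0), swap (ee 2) (ee 0), swap (ee 2) (ee 1),
    swap' (ee 1) (ee 0), swap' (ee 2) (ee 0), swap' (ee 2) (ee 1),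
    cancel, mul_neg, neg_mul, zero_mul, neg_neg, mul_zero, neg_zero,
    ExteriorAlgebra.ι_sq_zero, smul_zero, add_zero, zero_add]

-- ===================== the differential =====================
section Diff

variable (l : ℂ)

/-- coefficient projection `Ω¹ → U`. -/
def pj (i : Fin 3) : Om1 l →ₗ[ℂ] Uenv l :=
  (TensorProduct.lid ℂ (Uenv l)).toLinearMap ∘ₗ LinearMap.rTensor (Uenv l) (LinearMap.proj i)

@[simp] lemma pj_tmul (i : Fin 3) (v : V3) (u : Uenv l) :
    pj l i (v ⊗ₜ[ℂ] u) = v i • u := by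
  simp [pj]

variable (d : Uenv l →ₗ[ℂ] Om1 l)

/-- coefficients of the differential -/
def ph (i : Fin 3) : Uenv l →ₗ[ℂ] Uenv l := (pj l i) ∘ₗ d

lemma rhoLin_xvec (a : Fin 3) : rhoLin l (xvec l a) = rhoM l a := by
  fin_cases a <;>
    simp [rhoLin, xvec, Pi.single_apply]

variable (Φ : Uenv l →ₐ[ℂ] Module.End ℂ (Om1 l))

lemma ph_rec
    (hΦ : ∀ x : G l, Φ (iotaU l x) = lActVec l x)
    (hdx : ∀ a : Fin 3, d (Xgen l a) = dx l a)
    (hleib : ∀ u v : Uenv l, d (u * v) = Φ u (d v) + rAct l v (d u))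
    (a i : Fin 3) (u : Uenv l) :
    ph l d i (Xgen l a * u) =
      (∑ j, rhoM l a i j • ph l d j u) + Xgen l a * ph l d i u + omegaV a i • u := by
  have h1 : d (Xgen l a * u) = lActVec l (xvec l a) (d u) + (omegaV a) ⊗ₜ[ℂ] u := by
    rw [hleib]
    congr 1
    · rw [show Xgen l a = iotaU l (xvec l a) from rfl, hΦ]
    · rw [hdx]; simp [rAct, dx]
  have hA : ∀ t : Om1 l,
      pj l i (LinearMap.rTensor (Uenv l) (Matrix.toLin' (rhoLin l (xvec l a))) t)
        = ∑ j, rhoM l a i j • pj l j t := by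
    intro t
    have : (pj l i) ∘ₗ LinearMap.rTensor (Uenv l) (Matrix.toLin' (rhoLin l (xvec l a)))
        = ∑ j, rhoM l a i j • pj l j := by
      apply TensorProduct.ext'
      intro v u
      simp [Matrix.toLin'_apply, Matrix.mulVec, dotProduct, Finset.sum_smul,
        smul_smul, rhoLin_xvec, LinearMap.sum_apply]
    exact LinearMap.congr_fun this t
  have hB : ∀ t : Om1 l,
      pj l i (LinearMap.lTensor V3 (LinearMap.mulLeft ℂ (iotaU l (xvec l a))) t)
        = Xgen l a * pj l i t := by
    intro t
    have : (pj l i) ∘ₗ LinearMap.lTensor V3 (LinearMap.mulLeft ℂ (iotaU l (xvec l a)))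
        = (LinearMap.mulLeft ℂ (Xgen l a)) ∘ₗ pj l i := by
      apply TensorProduct.ext'
      intro v u
      simp [mul_smul_comm, Xgen]
    exact LinearMap.congr_fun this t
  show pj l i (d (Xgen l a * u)) = _
  rw [h1, map_add, pj_tmul]
  congr 1
  rw [lActVec, LinearMap.add_apply, map_add, hA, hB]
  rfl

end Diff

end DeRhamAux
namespace DeRhamAux
section Diff2

variable (l : ℂ) (d : Uenv l →ₗ[ℂ] Om1 l) (Φ : Uenv l →ₐ[ℂ] Module.End ℂ (Om1 l))
variable (hΦ : ∀ x : G l, Φ (iotaU l x) = lActVec l x)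
variable (hd1 : d 1 = 0)
variable (hdx : ∀ a : Fin 3, d (Xgen l a) = dx l a)
variable (hleib : ∀ u v : Uenv l, d (u * v) = Φ u (d v) + rAct l v (d u))

include hΦ hdx hleib

lemma ph_rec0 (u : Uenv l) :
    ph l d 0 (Xgen l 1 * u) = l • ph l d 2 u + Xgen l 1 * ph l d 0 u + u := by
  rw [ph_rec l d Φ hΦ hdx hleib 1 0 u]
  simp [Fin.sum_univ_three, rhoM, omegaV, Matrix.single, Pi.single_apply]

lemma ph_rec2 (u : Uenv l) :
    ph l d 2 (Xgen l 1 * u) = Xgen l 1 * ph l d 2 u := by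
  rw [ph_rec l d Φ hΦ hdx hleib 1 2 u]
  simp [Fin.sum_univ_three, rhoM, omegaV, Matrix.single, Pi.single_apply]

lemma ph2_pow (k : ℕ) (u : Uenv l) :
    ph l d 2 (Xgen l 1 ^ k * u) = Xgen l 1 ^ k * ph l d 2 u := by
  induction k with
  | zero => simp
  | succ n IH =>
      rw [pow_succ', mul_assoc, ph_rec2 l d Φ hΦ hdx hleib, IH, ← mul_assoc, ← pow_succ']

lemma ph0_pow (k : ℕ) (u : Uenv l) :
    ph l d 0 (Xgen l 1 ^ (k+1) * u)
      = Xgen l 1 ^ (k+1) * ph l d 0 u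
        + (((k:ℂ)+1) * l) • (Xgen l 1 ^ k * ph l d 2 u)
        + ((k:ℂ)+1) • (Xgen l 1 ^ k * u) := by
  induction k with
  | zero => simp [ph_rec0 l d Φ hΦ hdx hleib u]; abel
  | succ n IH =>
      push_cast
      rw [pow_succ' (Xgen l 1) (n+1), mul_assoc, ph_rec0 l d Φ hΦ hdx hleib, IH,
        ph2_pow l d Φ hΦ hdx hleib]
      simp only [mul_add, mul_smul_comm, ← mul_assoc, ← pow_succ']
      match_scalars <;> ring

end Diff2
end DeRhamAux
namespace DeRhamAux
section Filt

variable (l : ℂ)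

/-- The span of the generators together with 1. -/
def Gs : Submodule ℂ (Uenv l) := Submodule.span ℂ (insert 1 (Set.range (Xgen l)))

lemma one_mem_Gs : (1 : Uenv l) ∈ Gs l :=
  Submodule.subset_span (Set.mem_insert _ _)

lemma X_mem_Gs (a : Fin 3) : Xgen l a ∈ Gs l :=
  Submodule.subset_span (Set.mem_insert_of_mem _ (Set.mem_range_self a))

lemma Gs_mono (n : ℕ) : Gs l ^ n ≤ Gs l ^ (n + 1) := by
  intro x hx
  rw [pow_succ']
  simpa using Submodule.mul_mem_mul (one_mem_Gs l) hx

lemma one_mem_pow_zero : (1 : Uenv l) ∈ (Gs l) ^ 0 := by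
  rw [pow_zero, Submodule.one_eq_span]
  exact Submodule.mem_span_singleton_self 1

variable (d : Uenv l →ₗ[ℂ] Om1 l) (Φ : Uenv l →ₐ[ℂ] Module.End ℂ (Om1 l))
variable (hΦ : ∀ x : G l, Φ (iotaU l x) = lActVec l x)
lemma ph_one (hd1 : d 1 = 0) (i : Fin 3) : ph l d i 1 = 0 := by
  simp [ph, hd1]

lemma ph_X (hdx : ∀ a : Fin 3, d (Xgen l a) = dx l a) (i a : Fin 3) : ph l d i (Xgen l a) = omegaV a i • 1 := by
  simp [ph, hdx a, dx]

variable (hd1 : d 1 = 0)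
variable (hdx : ∀ a : Fin 3, d (Xgen l a) = dx l a)
variable (hleib : ∀ u v : Uenv l, d (u * v) = Φ u (d v) + rAct l v (d u))

include hΦ hd1 hdx hleib

/-- The coefficients of `d` lower the filtration degree. -/
lemma ph_filt : ∀ n : ℕ, ∀ i : Fin 3, ∀ u ∈ (Gs l) ^ (n + 1), ph l d i u ∈ (Gs l) ^ n := by
  intro n
  induction n with
  | zero =>
      intro i u hu
      rw [pow_one] at hu
      induction hu using Submodule.span_induction with
      | mem x hx =>
          rcases hx with h1 | ⟨a, rfl⟩
          · subst h1; rw [ph_one l d hd1 _]; exact Submodule.zero_mem _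
          · rw [ph_X l d hdx _ _]; exact Submodule.smul_mem _ _ (one_mem_pow_zero l)
      | zero => rw [map_zero]; exact Submodule.zero_mem _
      | add x y hx hy ihx ihy => rw [map_add]; exact Submodule.add_mem _ ihx ihy
      | smul c x hx ihx => rw [map_smul]; exact Submodule.smul_mem _ _ ihx
  | succ n IH =>
      intro i u hu
      rw [pow_succ'] at hu
      refine Submodule.mul_induction_on hu ?_ ?_
      · intro g hg v hv
        induction hg using Submodule.span_induction with
        | mem x hx =>
            rcases hx with h1 | ⟨a, rfl⟩
            · subst h1; rw [one_mul]; exact Gs_mono l n (IH i v hv)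
            · rw [ph_rec l d Φ hΦ hdx hleib a i v]
              refine Submodule.add_mem _ (Submodule.add_mem _ ?_ ?_) ?_
              · exact Submodule.sum_mem _ fun j _ =>
                  Gs_mono l n (Submodule.smul_mem _ _ (IH j v hv))
              · rw [pow_succ']
                exact Submodule.mul_mem_mul (X_mem_Gs l a) (IH i v hv)
              · exact Submodule.smul_mem _ _ hv
        | zero => rw [zero_mul, map_zero]; exact Submodule.zero_mem _
        | add x y hx hy ihx ihy => rw [add_mul, map_add]; exact Submodule.add_mem _ ihx ihy
        | smul c x hx ihx => rw [smul_mul_assoc, map_smul]; exact Submodule.smul_mem _ _ ihx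
      · intro x y hx hy
        rw [map_add]; exact Submodule.add_mem _ hx hy

/-- The key induction: left multiples of filtered elements by powers of `X₂` lie in any
submodule `W` containing the range of `ph 0`. -/
lemma filt_mem_W (W : Submodule ℂ (Uenv l)) (hW : ∀ v : Uenv l, ph l d 0 v ∈ W) :
    ∀ n : ℕ, ∀ u ∈ (Gs l) ^ n, ∀ k : ℕ, Xgen l 1 ^ k * u ∈ W := by
  intro n
  induction n with
  | zero =>
      intro u hu k
      rw [pow_zero, Submodule.one_eq_span] at hu
      obtain ⟨c, rfl⟩ := Submodule.mem_span_singleton.mp hu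
      rw [mul_smul_comm, mul_one]
      have key := ph0_pow l d Φ hΦ hdx hleib k 1
      simp only [mul_one, ph_one l d hd1, mul_zero, smul_zero, zero_add] at key
      have hk : ((k : ℂ) + 1) ≠ 0 := Nat.cast_add_one_ne_zero k
      have : Xgen l 1 ^ k = ((k:ℂ)+1)⁻¹ • ph l d 0 (Xgen l 1 ^ (k+1)) := by
        rw [key, smul_smul, inv_mul_cancel₀ hk, one_smul]
      rw [this, smul_smul]
      exact Submodule.smul_mem _ _ (hW _)
  | succ n IH =>
      intro u hu k
      have h0 : ph l d 0 u ∈ (Gs l) ^ n := ph_filt l d Φ hΦ hd1 hdx hleib n 0 u hu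
      have h2 : ph l d 2 u ∈ (Gs l) ^ n := ph_filt l d Φ hΦ hd1 hdx hleib n 2 u hu
      have key := ph0_pow l d Φ hΦ hdx hleib k u
      have hk : ((k : ℂ) + 1) ≠ 0 := Nat.cast_add_one_ne_zero k
      have hmem : ((k:ℂ)+1) • (Xgen l 1 ^ k * u) ∈ W := by
        have heq : ((k:ℂ)+1) • (Xgen l 1 ^ k * u)
            = ph l d 0 (Xgen l 1 ^ (k+1) * u)
              - Xgen l 1 ^ (k+1) * ph l d 0 u
              - (((k:ℂ)+1) * l) • (Xgen l 1 ^ k * ph l d 2 u) := by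
          rw [key]; abel
        rw [heq]
        exact Submodule.sub_mem _
          (Submodule.sub_mem _ (hW _) (IH _ h0 (k+1)))
          (Submodule.smul_mem _ _ (IH _ h2 k))
      have : Xgen l 1 ^ k * u = ((k:ℂ)+1)⁻¹ • (((k:ℂ)+1) • (Xgen l 1 ^ k * u)) := by
        rw [smul_smul, inv_mul_cancel₀ hk, one_smul]
      rw [this]
      exact Submodule.smul_mem _ _ hmem

end Filt
end DeRhamAux
namespace DeRhamAux
section Gen

variable (l : ℂ)

lemma xvec_decomp (x : G l) : x = x 0 • xvec l 0 + x 1 • xvec l 1 + x 2 • xvec l 2 := by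
  show (x : Fin 3 → ℂ)
    = x 0 • (Pi.single 0 1 : Fin 3 → ℂ) + x 1 • (Pi.single 1 1 : Fin 3 → ℂ)
      + x 2 • (Pi.single 2 1 : Fin 3 → ℂ)
  funext i; fin_cases i <;> simp [Pi.single_apply]

lemma iota_mem (x : G l) : iotaU l x ∈ Algebra.adjoin ℂ (Set.range (Xgen l)) := by
  rw [xvec_decomp l x, map_add, map_add, map_smul, map_smul,
    map_smul]
  exact add_mem
    (add_mem (Subalgebra.smul_mem _ (Algebra.subset_adjoin (Set.mem_range_self (f := Xgen l) 0)) _)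
      (Subalgebra.smul_mem _ (Algebra.subset_adjoin (Set.mem_range_self (f := Xgen l) 1)) _))
    (Subalgebra.smul_mem _ (Algebra.subset_adjoin (Set.mem_range_self (f := Xgen l) 2)) _)

set_option synthInstance.maxHeartbeats 1000000 in
/-- The Lie algebra map to the subalgebra generated by the `Xgen`. -/
def into : G l →ₗ⁅ℂ⁆ Algebra.adjoin ℂ (Set.range (Xgen l)) where
  toFun x := ⟨iotaU l x, iota_mem l x⟩
  map_add' x y := Subtype.ext (map_add _ _ _)
  map_smul' c x := Subtype.ext (map_smul _ _ _)
  map_lie' {x y} := by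
    apply Subtype.ext
    show iotaU l ⁅x, y⁆ = _
    rw [LieHom.map_lie]
    simp [Ring.lie_def]

set_option synthInstance.maxHeartbeats 1000000 in
lemma adjoin_top : ∀ u : Uenv l, u ∈ Algebra.adjoin ℂ (Set.range (Xgen l)) := by
  intro u
  set S := Algebra.adjoin ℂ (Set.range (Xgen l)) with hS
  let g : Uenv l →ₐ[ℂ] S := UniversalEnvelopingAlgebra.lift ℂ (into l)
  have hcomp : S.val.comp g = AlgHom.id ℂ (Uenv l) := by
    apply UniversalEnvelopingAlgebra.hom_ext
    apply LieHom.ext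
    intro x
    show S.val (g (UniversalEnvelopingAlgebra.ι ℂ x)) = UniversalEnvelopingAlgebra.ι ℂ x
    have : g (UniversalEnvelopingAlgebra.ι ℂ x) = into l x :=
      UniversalEnvelopingAlgebra.lift_ι_apply ℂ (into l) x
    rw [this]
    rfl
  have : S.val (g u) = u := by rw [← AlgHom.comp_apply, hcomp]; rfl
  rw [← this]
  exact (g u).2

variable (d : Uenv l →ₗ[ℂ] Om1 l) (Φ : Uenv l →ₐ[ℂ] Module.End ℂ (Om1 l))
variable (hΦ : ∀ x : G l, Φ (iotaU l x) = lActVec l x)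
variable (hd1 : d 1 = 0)
variable (hdx : ∀ a : Fin 3, d (Xgen l a) = dx l a)
variable (hleib : ∀ u v : Uenv l, d (u * v) = Φ u (d v) + rAct l v (d u))

include hΦ hd1 hdx hleib in
lemma mem_W_all (W : Submodule ℂ (Uenv l)) (hW : ∀ v : Uenv l, ph l d 0 v ∈ W) :
    ∀ u : Uenv l, u ∈ W := by
  intro u
  have h1 : u ∈ Submodule.span ℂ ((Submonoid.closure (Set.range (Xgen l)) : Submonoid (Uenv l)) :
      Set (Uenv l)) := by
    have h2 := adjoin_top l u
    rw [← Subalgebra.mem_toSubmodule, Algebra.adjoin_eq_span] at h2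
    exact h2
  refine Submodule.span_le.mpr ?_ h1
  intro m hm
  have hmB : ∃ n : ℕ, m ∈ (Gs l) ^ n := by
    induction hm using Submonoid.closure_induction with
    | mem x hx =>
        exact ⟨1, by rw [pow_one]; exact Submodule.subset_span (Set.mem_insert_of_mem _ hx)⟩
    | one => exact ⟨0, one_mem_pow_zero l⟩
    | mul x y hx hy ihx ihy =>
        obtain ⟨n1, h1⟩ := ihx; obtain ⟨n2, h2⟩ := ihy
        exact ⟨n1 + n2, by rw [pow_add]; exact Submodule.mul_mem_mul h1 h2⟩
  obtain ⟨n, hn⟩ := hmB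
  have := filt_mem_W l d Φ hΦ hd1 hdx hleib W hW n m hn 0
  simpa using this

end Gen
end DeRhamAux
/-- Degree-3 noncommutative de Rham cohomology of `ℝ³_λ`: every 3-form is exact
(`d₂ : Ω² → Ω³` is surjective), i.e. `H³ = {0}`. -/
theorem deRham_H3 (l : ℂ)
    (Φ : Uenv l →ₐ[ℂ] Module.End ℂ (Om1 l))
    (hΦ : ∀ x : G l, Φ (iotaU l x) = lActVec l x)
    (d : Uenv l →ₗ[ℂ] Om1 l)
    (hd1 : d 1 = 0) (hdx : ∀ a : Fin 3, d (Xgen l a) = dx l a)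
    (hleib : ∀ u v : Uenv l, d (u * v) = Φ u (d v) + rAct l v (d u))
    (D1 : Om1 l →ₗ[ℂ] Om2 l)
    (hD1 : ∀ (v : V3) (u : Uenv l),
      D1 (v ⊗ₜ[ℂ] u) = LinearMap.rTensor (Uenv l) (wedge1 v) (d u))
    (D2 : Om2 l →ₗ[ℂ] Om3 l)
    (hD2 : ∀ (b : ⋀[ℂ]^2 V3) (u : Uenv l),
      D2 (b ⊗ₜ[ℂ] u) = LinearMap.rTensor (Uenv l) (wedge2 b) (d u)) :
    Function.Surjective D2 := by
  have key : ∀ u : Uenv l, (DeRhamAux.tau ⊗ₜ[ℂ] u : Om3 l) ∈ LinearMap.range D2 := by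
    set W : Submodule ℂ (Uenv l) :=
      Submodule.comap ((TensorProduct.mk ℂ (⋀[ℂ]^3 V3) (Uenv l)) DeRhamAux.tau)
        (LinearMap.range D2) with hWdef
    have hW : ∀ v : Uenv l, DeRhamAux.ph l d 0 v ∈ W := by
      intro v
      have hw2 : LinearMap.rTensor (Uenv l) (wedge2 (wedge1 (DeRhamAux.ee 1) (DeRhamAux.ee 2)))
          = (TensorProduct.mk ℂ (⋀[ℂ]^3 V3) (Uenv l) DeRhamAux.tau) ∘ₗ DeRhamAux.pj l 0 := by
        apply TensorProduct.ext'
        intro w u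
        simp only [LinearMap.rTensor_tmul, LinearMap.coe_comp, Function.comp_apply,
          DeRhamAux.pj_tmul, TensorProduct.mk_apply, DeRhamAux.wedge2_b12]
        rw [TensorProduct.smul_tmul]
      simp only [hWdef, Submodule.mem_comap, TensorProduct.mk_apply]
      refine ⟨(wedge1 (DeRhamAux.ee 1) (DeRhamAux.ee 2)) ⊗ₜ[ℂ] v, ?_⟩
      rw [hD2, hw2]
      rfl
    intro u
    exact DeRhamAux.mem_W_all l d Φ hΦ hd1 hdx hleib W hW u
  intro t
  have ht : t ∈ LinearMap.range D2 := by
    induction t using TensorProduct.induction_on with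
    | zero => exact Submodule.zero_mem _
    | tmul b u =>
        obtain ⟨c, rfl⟩ := DeRhamAux.exterior3_eq_smul b
        rw [← TensorProduct.smul_tmul']
        exact Submodule.smul_mem _ _ (key u)
    | add x y hx hy => exact Submodule.add_mem _ hx hy
  exact ht
end
end

section
/- For every λ ∈ ℂ and all a, b ∈ {1,2,3}, the element x_a² − x_b² ∈ U_λ satisfies □(x_a² − x_b²) = 0, where □ is the wave operator. -/
noncomputable section
open TensorProduct

attribute [local instance] LieRing.ofAssociativeRing

/-! ### Auxiliary machinery for the proof -/

/-- Coordinate functionals dual to the `ω_e`. -/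
def phiE : Fin 3 → (V3 →ₗ[ℂ] ℂ) :=
  ![-(LinearMap.proj 2), LinearMap.proj 0, LinearMap.proj 1]

/-- Extraction of the `ω_e`-component of an element of `Ω¹`. -/
def ExtE (l : ℂ) (e : Fin 3) : Om1 l →ₗ[ℂ] Uenv l :=
  (TensorProduct.lid ℂ (Uenv l)).toLinearMap ∘ₗ LinearMap.rTensor (Uenv l) (phiE e)

lemma Ext_tmul (l : ℂ) (e : Fin 3) (v : V3) (u : Uenv l) :
    ExtE l e (v ⊗ₜ[ℂ] u) = phiE e v • u := by
  simp [ExtE]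

lemma phiE_omega (e a : Fin 3) : phiE e (omegaV a) = if e = a then 1 else 0 := by
  fin_cases e <;> fin_cases a <;>
    simp [phiE, omegaV, Pi.single_apply]

lemma Ext_rAct_dx (l : ℂ) (e a : Fin 3) (w : Uenv l) :
    ExtE l e (rAct l w (dx l a)) = if e = a then w else 0 := by
  simp only [rAct, dx, LinearMap.lTensor_tmul, LinearMap.mulRight_apply, one_mul,
    Ext_tmul, phiE_omega]
  split <;> simp

lemma rhoLin_xvec (l : ℂ) (a : Fin 3) : rhoLin l (xvec l a) = rhoM l a := by
  fin_cases a <;>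
    simp [rhoLin, xvec, Pi.single_apply, show ((0:Fin 3) ≠ 1) by decide]

lemma phiE_rho_omega (l : ℂ) (e a : Fin 3) :
    phiE e ((rhoM l a).mulVec (omegaV a)) =
      if e = 0 ∧ a = 0 then -l else 0 := by
  fin_cases e <;> fin_cases a <;>
    simp [phiE, rhoM, omegaV, Matrix.mulVec, dotProduct,
      Fin.sum_univ_three, Pi.single_apply, Matrix.single, Matrix.diagonal]

/-- The differences of squares `x_a² − x_b²` are massless modes: `□(x_a² − x_b²) = 0`.
Here the partial derivatives `∂ᵃ` are defined by `d f = Σ_a dx_a·∂ᵃf` and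
`□f = Σ_a ∂ᵃ∂ᵃf`. -/
theorem wave_operator_kills_difference_of_squares (l : ℂ)
    (Φ : Uenv l →ₐ[ℂ] Module.End ℂ (Om1 l))
    (hΦ : ∀ x : G l, Φ (iotaU l x) = lActVec l x)
    (d : Uenv l →ₗ[ℂ] Om1 l)
    (hd1 : d 1 = 0) (hdx : ∀ a : Fin 3, d (Xgen l a) = dx l a)
    (hleib : ∀ u v : Uenv l, d (u * v) = Φ u (d v) + rAct l v (d u))
    (P : Fin 3 → Uenv l → Uenv l)
    (hP : ∀ f : Uenv l,
      d f = rAct l (P 0 f) (dx l 0) + rAct l (P 1 f) (dx l 1) + rAct l (P 2 f) (dx l 2))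
    (a b : Fin 3) :
    (∑ e : Fin 3, P e (P e (Xgen l a ^ 2 - Xgen l b ^ 2))) = 0 := by
  -- P is determined by d via extraction
  have hPeq : ∀ (e : Fin 3) (f : Uenv l), P e f = ExtE l e (d f) := by
    intro e f
    rw [hP f]
    simp only [map_add, Ext_rAct_dx]
    fin_cases e <;> simp
  -- the differential of a square
  have hd2 : ∀ c : Fin 3, d (Xgen l c ^ 2) =
      (Matrix.toLin' (rhoM l c)) (omegaV c) ⊗ₜ[ℂ] (1 : Uenv l)
        + omegaV c ⊗ₜ[ℂ] Xgen l c + omegaV c ⊗ₜ[ℂ] Xgen l c := by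
    intro c
    rw [sq, hleib, show Φ (Xgen l c) = lActVec l (xvec l c) from hΦ _, hdx]
    simp [lActVec, rAct, dx, rhoLin_xvec, Xgen, add_assoc]
  -- the second-order coefficients of a square sum to 2
  have hL2 : ∀ c : Fin 3,
      (∑ e : Fin 3, ExtE l e (d (ExtE l e (d (Xgen l c ^ 2))))) = (2 : Uenv l) := by
    intro c
    have key : ∀ e : Fin 3, ExtE l e (d (Xgen l c ^ 2)) =
        (if e = 0 ∧ c = 0 then -l else 0) • (1 : Uenv l)
          + ((if e = c then (1:ℂ) else 0) • Xgen l c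
            + (if e = c then (1:ℂ) else 0) • Xgen l c) := by
      intro e
      rw [hd2]
      simp [Ext_tmul, phiE_omega, phiE_rho_omega, add_assoc, Matrix.toLin'_apply]
    simp only [key, map_add, map_smul, hd1, hdx, smul_zero, zero_add]
    simp only [dx, Ext_tmul, phiE_omega]
    fin_cases c <;> simp [Fin.sum_univ_three] <;> norm_num
  -- put it together
  have hsub : ∀ e : Fin 3, P e (P e (Xgen l a ^ 2 - Xgen l b ^ 2)) =
      ExtE l e (d (ExtE l e (d (Xgen l a ^ 2)))) - ExtE l e (d (ExtE l e (d (Xgen l b ^ 2)))) := by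
    intro e
    rw [hPeq, hPeq, map_sub, map_sub, map_sub, map_sub]
  simp only [hsub, Finset.sum_sub_distrib, hL2, sub_self]
end
end

section
/- For every λ ∈ ℂ and all a, b ∈ {1,2,3} with a ≠ b, the 1-form A := dx_a·x_b ∈ Ω¹ has field strength F := d₁(A) = (ω_a ∧ ω_b) ⊗ 1 (i.e. F = dx_a ∧ dx_b), and A is a zero mode of the Maxwell operator: *(d₁(*(d₁(A)))) = 0, where □₁ = *d*d is the Maxwell wave operator on 1-forms. -/
noncomputable section
open TensorProduct

attribute [local instance] LieRing.ofAssociativeRing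

set_option synthInstance.maxHeartbeats 1000000 in
/-- For `a ≠ b`, the 1-form `A = dx_a·x_b` has field strength
`F = d₁(A) = (ω_a ∧ ω_b) ⊗ 1 = dx_a ∧ dx_b`, and `A` is a zero mode of the Maxwell
operator `□₁ = *d*d` on 1-forms, where the Hodge star `* : Λ²ℂ³ → Λ¹ℂ³` is determined by
`*(ω₂∧ω₃) = ω₁`, `*(ω₃∧ω₁) = ω₂`, `*(ω₁∧ω₂) = ω₃`. -/
theorem maxwell_zero_mode (l : ℂ) (a b : Fin 3) (hab : a ≠ b)
    (Φ : Uenv l →ₐ[ℂ] Module.End ℂ (Om1 l))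
    (hΦ : ∀ x : G l, Φ (iotaU l x) = lActVec l x)
    (d : Uenv l →ₗ[ℂ] Om1 l)
    (hd1 : d 1 = 0) (hdx : ∀ a : Fin 3, d (Xgen l a) = dx l a)
    (hleib : ∀ u v : Uenv l, d (u * v) = Φ u (d v) + rAct l v (d u))
    (D1 : Om1 l →ₗ[ℂ] Om2 l)
    (hD1 : ∀ (v : V3) (u : Uenv l),
      D1 (v ⊗ₜ[ℂ] u) = LinearMap.rTensor (Uenv l) (wedge1 v) (d u))
    (S2 : ⋀[ℂ]^2 V3 →ₗ[ℂ] V3)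
    (hS2a : S2 (wedge1 (omegaV 1) (omegaV 2)) = omegaV 0)
    (hS2b : S2 (wedge1 (omegaV 2) (omegaV 0)) = omegaV 1)
    (hS2c : S2 (wedge1 (omegaV 0) (omegaV 1)) = omegaV 2) :
    D1 (rAct l (Xgen l b) (dx l a)) = (wedge1 (omegaV a) (omegaV b)) ⊗ₜ[ℂ] (1 : Uenv l) ∧
    LinearMap.rTensor (Uenv l) S2
        (D1 (LinearMap.rTensor (Uenv l) S2 (D1 (rAct l (Xgen l b) (dx l a))))) = 0 := by
  have hA : rAct l (Xgen l b) (dx l a) = (omegaV a) ⊗ₜ[ℂ] (Xgen l b) := by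
    simp [rAct, dx, LinearMap.lTensor_tmul]
  have h1 : D1 (rAct l (Xgen l b) (dx l a))
      = (wedge1 (omegaV a) (omegaV b)) ⊗ₜ[ℂ] (1 : Uenv l) := by
    rw [hA, hD1, hdx, dx, LinearMap.rTensor_tmul]
  refine ⟨h1, ?_⟩
  rw [h1, LinearMap.rTensor_tmul, hD1, hd1, map_zero, map_zero]
end
end
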